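/- For m ≥ n ≥ 6 and m ≥ 11, R(B³K_m, B³C_n) ≥ m + ⌊(n−1)/2⌋ − 1. Specifically, on m + ⌊(n−1)/2⌋ − 2 vertices partitioned into A of size ⌊(n−1)/2⌋ and B of size m − 2, coloring red all triples meeting B in at least two points and blue the rest yields no red Berge-K_m and no blue Berge n-cycle. -/

import Mathlib

def BergeCycle (N n : ℕ) (E : Finset (Fin N) → Prop) : Prop :=
  ∃ v : ZMod n → Fin N, Function.Injective v ∧
    ∃ h : ZMod n → Finset (Fin N), Function.Injective h ∧
      ∀ i : ZMod n, E (h i) ∧ v i ∈ h i ∧ v (i + 1) ∈ h i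

def BergeK (N m : ℕ) (E : Finset (Fin N) → Prop) : Prop :=
  ∃ v : Fin m → Fin N, Function.Injective v ∧
    ∃ h : Fin m → Fin m → Finset (Fin N),
      (∀ i j : Fin m, i < j → E (h i j) ∧ v i ∈ h i j ∧ v j ∈ h i j) ∧
      (∀ i j i' j' : Fin m, i < j → i' < j' → h i j = h i' j' → i = i' ∧ j = j')

/-- For m ≥ n ≥ 6 and m ≥ 11 there is a red/blue coloring of the triples of
a set of m + ⌊(n−1)/2⌋ − 2 vertices with no red Berge-K_m and no blue Berge
n-cycle, so R(B³K_m, B³C_n) ≥ m + ⌊(n−1)/2⌋ − 1. -/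

theorem stmt13 (m n : ℕ) (hn : 6 ≤ n) (hnm : n ≤ m) (hm : 11 ≤ m) :
    ∃ c : Finset (Fin (m + (n - 1) / 2 - 2)) → Bool,
      ¬ BergeK (m + (n - 1) / 2 - 2) m (fun s => s.card = 3 ∧ c s = true) ∧
      ¬ BergeCycle (m + (n - 1) / 2 - 2) n (fun s => s.card = 3 ∧ c s = false) := by
  set a := (n - 1) / 2 with ha
  set N := m + (n - 1) / 2 - 2 with hN
  have haN : a < N := by omega
  have ha2 : 2 ≤ a := by omega
  -- cardinality of A and B parts
  have hAcard : (Finset.univ.filter fun x : Fin N => x.val < a).card = a := by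
    have : (Finset.univ.filter fun x : Fin N => x.val < a) = Finset.Iio ⟨a, haN⟩ := by
      ext x; simp [Fin.lt_def]
    rw [this, Fin.card_Iio]
  have hBcard : (Finset.univ.filter fun x : Fin N => a ≤ x.val).card = N - a := by
    have h2 := Finset.card_filter_add_card_filter_not
      (s := (Finset.univ : Finset (Fin N))) (p := fun x => x.val < a)
    simp only [not_lt, Finset.card_univ, Fintype.card_fin] at h2
    omega
  refine ⟨fun s => decide (2 ≤ (s.filter fun x : Fin N => a ≤ x.val).card), ?_, ?_⟩
  · -- no red Berge K_m
    rintro ⟨v, hv, h, hIn, hInj⟩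
    -- at most one main vertex in A
    have key : ∀ i j : Fin m, i ≠ j → (v i).val < a → (v j).val < a → False := by
      intro i j hij hi hj
      have main : ∀ i j : Fin m, i < j → (v i).val < a → (v j).val < a → False := by
        intro i j hlt hi hj
        obtain ⟨⟨hc, hR⟩, hvi, hvj⟩ := hIn i j hlt
        rw [decide_eq_true_iff] at hR
        have hvne : v i ≠ v j := fun e => hlt.ne (hv e)
        have hsub : (h i j).filter (fun x => a ≤ x.val) ⊆ h i j \ {v i, v j} := by
          intro z hz
          simp only [Finset.mem_filter] at hz
          simp only [Finset.mem_sdiff, Finset.mem_insert, Finset.mem_singleton]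
          refine ⟨hz.1, ?_⟩
          rintro (rfl | rfl) <;> omega
        have hpair : ({v i, v j} : Finset (Fin N)) ⊆ h i j := by
          intro z hz; simp only [Finset.mem_insert, Finset.mem_singleton] at hz
          rcases hz with rfl | rfl <;> assumption
        have := Finset.card_le_card hsub
        rw [Finset.card_sdiff_of_subset hpair, hc, Finset.card_pair hvne] at this
        omega
      rcases lt_or_gt_of_ne hij with h' | h'
      · exact main i j h' hi hj
      · exact main j i h' hj hi
    have hle1 : (Finset.univ.filter fun i : Fin m => (v i).val < a).card ≤ 1 := by
      rw [Finset.card_le_one]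
      intro i hi j hj
      simp only [Finset.mem_filter] at hi hj
      by_contra hij
      exact key i j hij hi.2 hj.2
    -- the rest map injectively into B
    have hinj : ((Finset.univ.filter fun i : Fin m => ¬ (v i).val < a).card ≤ N - a) := by
      rw [← hBcard]
      apply Finset.card_le_card_of_injOn v
      · intro i hi; simp only [Finset.mem_coe, Finset.mem_filter, not_lt] at hi ⊢; exact ⟨Finset.mem_univ _, hi.2⟩
      · exact hv.injOn
    have h2 := Finset.card_filter_add_card_filter_not
      (s := (Finset.univ : Finset (Fin m))) (p := fun i => (v i).val < a)
    simp only [Finset.card_univ, Fintype.card_fin] at h2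
    omega
  · -- no blue Berge cycle
    rintro ⟨v, hv, h, hh, hIn⟩
    haveI : NeZero n := ⟨by omega⟩
    set S := (Finset.univ.filter fun i : ZMod n => a ≤ (v i).val) with hS
    -- each hyperedge blue: can't have two core vertices in B
    have step : ∀ i : ZMod n, a ≤ (v i).val → (v (i + 1)).val < a := by
      intro i hi
      by_contra hcon
      push_neg at hcon
      obtain ⟨⟨hc, hB⟩, hvi, hvj⟩ := hIn i
      rw [decide_eq_false_iff_not] at hB
      apply hB
      have hvne : v i ≠ v (i + 1) := by
        haveI : Fact (1 < n) := ⟨by omega⟩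
        intro e
        exact one_ne_zero (α := ZMod n) (left_eq_add.mp (hv e))
      have hpair : ({v i, v (i + 1)} : Finset (Fin N)) ⊆ (h i).filter fun x => a ≤ x.val := by
        intro z hz; simp only [Finset.mem_insert, Finset.mem_singleton] at hz
        rcases hz with rfl | rfl <;> simp [Finset.mem_filter, hvi, hvj, hi, hcon]
      calc 2 = ({v i, v (i+1)} : Finset (Fin N)).card := (Finset.card_pair hvne).symm
        _ ≤ _ := Finset.card_le_card hpair
    -- S maps injectively into complement via +1
    have hScard : S.card ≤ n - S.card := by
      have : S.card ≤ Sᶜ.card := by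
        apply Finset.card_le_card_of_injOn (fun i => i + 1)
        · intro i hi
          simp only [Finset.mem_coe, hS, Finset.mem_filter, Finset.mem_univ, true_and] at hi
          simp only [Finset.mem_coe, Finset.mem_compl, hS, Finset.mem_filter, Finset.mem_univ, true_and, not_le]
          exact step i hi
        · exact fun x _ y _ e => by simpa using e
      have hc : Sᶜ.card = n - S.card := by
        rw [Finset.card_compl]
        congr 1
        exact ZMod.card n
      omega
    have hSn : S.card ≤ n := by
      have := Finset.card_le_univ S
      simpa [Finset.card_univ, ZMod.card n] using this
    -- complement maps injectively into A
    have hTA : n - S.card ≤ a := by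
      have : Sᶜ.card ≤ (Finset.univ.filter fun x : Fin N => x.val < a).card := by
        apply Finset.card_le_card_of_injOn v
        · intro i hi
          simp only [Finset.mem_coe, Finset.mem_compl, hS, Finset.mem_filter, Finset.mem_univ, true_and,
            not_le] at hi
          simp [Finset.mem_filter, hi]
        · exact hv.injOn
      rw [hAcard] at this
      have hc : Sᶜ.card = n - S.card := by
        rw [Finset.card_compl]; congr 1; exact ZMod.card n
      omega
    omega
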